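/- If G is a finite generating set of n-qubit Pauli strings whose real span (times i) is already closed under commutators and forms a simple Lie algebra, then every vertex of the frustration graph of G has the same degree; i.e. every P ∈ G anticommutes with the same number of other elements of G. -/

import Mathlib

open Matrix

/-- The four single-qubit Pauli matrices: `0 ↦ I`, `1 ↦ X`, `2 ↦ Y`, `3 ↦ Z`. -/
noncomputable def pauliMat (a : Fin 4) : Matrix (Fin 2) (Fin 2) ℂ :=
  if a = 0 then 1
  else if a = 1 then !![0, 1; 1, 0]
  else if a = 2 then !![0, -Complex.I; Complex.I, 0]
  else !![1, 0; 0, -1]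

/-- The `n`-qubit Pauli string indexed by `s : Fin n → Fin 4` (tensor product of
single-qubit Paulis, as a matrix with index set `Fin n → Fin 2`). -/
noncomputable def PauliString (n : ℕ) (s : Fin n → Fin 4) :
    Matrix (Fin n → Fin 2) (Fin n → Fin 2) ℂ :=
  fun i j => ∏ k, pauliMat (s k) (i k) (j k)
attribute [local instance] Classical.propDecidable
attribute [local instance 100] LieRing.ofAssociativeRing

/-- `A` and `B` anticommute (as Pauli strings). -/
def AntiComm (n : ℕ) (A B : Fin n → Fin 4) : Prop :=
  PauliString n A * PauliString n B = -(PauliString n B * PauliString n A)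

namespace FGaux

def mul4 (a b : Fin 4) : Fin 4 :=
  ⟨(a.val ^^^ b.val) % 4, Nat.mod_lt _ (by norm_num)⟩

noncomputable def ph (a b : Fin 4) : ℂ :=
  if a = 0 ∨ b = 0 ∨ a = b then 1
  else if (a = 1 ∧ b = 2) ∨ (a = 2 ∧ b = 3) ∨ (a = 3 ∧ b = 1) then Complex.I
  else -Complex.I

lemma mul4_self (a : Fin 4) : mul4 a a = 0 := by revert a; decide

lemma mul4_comm (a b : Fin 4) : mul4 a b = mul4 b a := by revert a b; decide

lemma mul4_eq_zero {a b : Fin 4} : mul4 a b = 0 ↔ a = b := by revert a b; decide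

lemma ph_self (a : Fin 4) : ph a a = 1 := by fin_cases a <;> norm_num [ph, Fin.ext_iff] <;> norm_num [show ((3:Fin 4):ℕ)=3 from rfl]

lemma ph_mul_ph (a b : Fin 4) : ph a b * ph b a = 1 := by
  fin_cases a <;> fin_cases b <;> norm_num [ph, Fin.ext_iff, Complex.I_mul_I] <;> norm_num [show ((3:Fin 4):ℕ)=3 from rfl, Complex.I_mul_I]

lemma ph_or (a b : Fin 4) : ph a b = ph b a ∨ ph a b = -ph b a := by
  fin_cases a <;> fin_cases b <;> norm_num [ph, Fin.ext_iff] <;> norm_num [show ((3:Fin 4):ℕ)=3 from rfl]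

lemma pauli_mul (a b : Fin 4) :
    pauliMat a * pauliMat b = ph a b • pauliMat (mul4 a b) := by
  fin_cases a <;> fin_cases b <;>
    · ext i j
      fin_cases i <;> fin_cases j <;>
        simp [pauliMat, ph, mul4, Matrix.mul_apply, Fin.sum_univ_two, Matrix.one_apply,
          Complex.I_mul_I] <;> ring_nf <;> simp [Complex.I_sq, Complex.I_mul_I]

lemma pauli_trace (a : Fin 4) :
    ∑ x : Fin 2, pauliMat a x x = if a = 0 then 2 else 0 := by
  fin_cases a <;> simp [pauliMat, Fin.sum_univ_two, Matrix.one_apply] <;> norm_num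

end FGaux

namespace FGaux

variable {n : ℕ}

/-- product string -/
def pm (s t : Fin n → Fin 4) : Fin n → Fin 4 := fun k => mul4 (s k) (t k)

/-- product phase -/
noncomputable def pc (s t : Fin n → Fin 4) : ℂ := ∏ k, ph (s k) (t k)

set_option maxHeartbeats 1000000 in
lemma PS_mul (s t : Fin n → Fin 4) :
    PauliString n s * PauliString n t = pc s t • PauliString n (pm s t) := by
  ext i j
  rw [Matrix.mul_apply]
  simp only [PauliString, Matrix.smul_apply, smul_eq_mul, pc, pm]
  calc ∑ k : Fin n → Fin 2, (∏ m, pauliMat (s m) (i m) (k m)) * ∏ m, pauliMat (t m) (k m) (j m)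
      = ∑ k : Fin n → Fin 2, ∏ m, (pauliMat (s m) (i m) (k m) * pauliMat (t m) (k m) (j m)) := by
        simp [Finset.prod_mul_distrib]
    _ = ∏ m, ∑ x : Fin 2, pauliMat (s m) (i m) x * pauliMat (t m) x (j m) :=
        (Fintype.prod_sum (fun m (x : Fin 2) => pauliMat (s m) (i m) x * pauliMat (t m) x (j m))).symm
    _ = ∏ m, (pauliMat (s m) * pauliMat (t m)) (i m) (j m) := by
        simp [Matrix.mul_apply]
    _ = ∏ m, (ph (s m) (t m) • pauliMat (mul4 (s m) (t m))) (i m) (j m) := by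
        simp only [pauli_mul]
    _ = (∏ k, ph (s k) (t k)) * ∏ k, pauliMat (mul4 (s k) (t k)) (i k) (j k) := by
        simp [Matrix.smul_apply, Finset.prod_mul_distrib, smul_eq_mul]

lemma PS_one : PauliString n (fun _ => 0) = 1 := by
  ext i j
  by_cases h : i = j
  · subst h; simp [PauliString, pauliMat, Matrix.one_apply]
  · obtain ⟨k, hk⟩ := Function.ne_iff.mp h
    rw [PauliString, Matrix.one_apply, if_neg h]
    exact Finset.prod_eq_zero (Finset.mem_univ k) (by simp [pauliMat, Matrix.one_apply, hk])

lemma pm_self (s : Fin n → Fin 4) : pm s s = fun _ => 0 := by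
  funext k; exact mul4_self _

lemma pc_self (s : Fin n → Fin 4) : pc s s = 1 := by
  simp [pc, ph_self]

lemma PS_sq (s : Fin n → Fin 4) : PauliString n s * PauliString n s = 1 := by
  rw [PS_mul, pm_self, pc_self, one_smul, PS_one]

set_option maxHeartbeats 1000000 in
lemma trace_PS (u : Fin n → Fin 4) :
    Matrix.trace (PauliString n u) = if u = (fun _ => 0) then (2^n : ℂ) else 0 := by
  rw [Matrix.trace]
  simp only [Matrix.diag, PauliString]
  rw [← Fintype.prod_sum (fun m (x : Fin 2) => pauliMat (u m) x x)]
  simp only [pauli_trace]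
  by_cases h : u = fun _ => 0
  · rw [if_pos h]
    subst h
    simp
  · rw [if_neg h]
    obtain ⟨k, hk⟩ := Function.ne_iff.mp h
    exact Finset.prod_eq_zero (Finset.mem_univ k) (if_neg hk)

lemma pm_eq_zero {s t : Fin n → Fin 4} : pm s t = (fun _ => 0) ↔ s = t := by
  constructor
  · intro h; funext k
    exact mul4_eq_zero.mp (congrFun h k)
  · rintro rfl; exact pm_self s

lemma trace_PS_mul (s t : Fin n → Fin 4) :
    Matrix.trace (PauliString n s * PauliString n t) = if s = t then (2^n : ℂ) else 0 := by
  rw [PS_mul, Matrix.trace_smul, trace_PS]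
  by_cases h : s = t
  · subst h; rw [if_pos (pm_self s), if_pos rfl, pc_self, one_smul]
  · rw [if_neg (fun hc => h (pm_eq_zero.mp hc)), if_neg h, smul_zero]

end FGaux

namespace FGaux

variable {n : ℕ}

abbrev Mx (n : ℕ) := Matrix (Fin n → Fin 2) (Fin n → Fin 2) ℂ

lemma smul_PS_eq_zero {c : ℂ} {u : Fin n → Fin 4} (h : c • PauliString n u = 0) :
    c = 0 := by
  have := congrArg (fun X : Mx n => Matrix.trace (X * PauliString n u)) h
  simp only [smul_mul_assoc, Matrix.trace_smul, zero_mul, Matrix.trace_zero,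
    trace_PS_mul, if_pos rfl, smul_eq_mul] at this
  have h2 : (2:ℂ)^n ≠ 0 := pow_ne_zero _ two_ne_zero
  exact (mul_eq_zero.mp this).resolve_right h2

lemma pc_mul_pc (s t : Fin n → Fin 4) : pc s t * pc t s = 1 := by
  rw [pc, pc, ← Finset.prod_mul_distrib]
  simp [ph_mul_ph]

lemma pc_ne_zero (s t : Fin n → Fin 4) : pc s t ≠ 0 :=
  left_ne_zero_of_mul_eq_one (pc_mul_pc s t)

lemma prod_or {ι : Type*} (s : Finset ι) (f g : ι → ℂ) (h : ∀ i, f i = g i ∨ f i = -g i) :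
    (∏ i ∈ s, f i = ∏ i ∈ s, g i) ∨ (∏ i ∈ s, f i = -∏ i ∈ s, g i) := by
  classical
  induction s using Finset.induction_on with
  | empty => left; simp
  | insert _ _ ha ih =>
    rw [Finset.prod_insert ha, Finset.prod_insert ha]
    rcases h _ with hf | hf <;> rcases ih with hi | hi
    · left; rw [hf, hi]
    · right; rw [hf, hi]; ring
    · right; rw [hf, hi]; ring
    · left; rw [hf, hi]; ring

lemma pc_or (s t : Fin n → Fin 4) : pc s t = pc t s ∨ pc s t = -pc t s :=
  prod_or _ _ _ (fun k => ph_or (s k) (t k))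

lemma pm_comm (s t : Fin n → Fin 4) : pm s t = pm t s := by
  funext k; exact mul4_comm _ _

lemma anticomm_pc {s t : Fin n → Fin 4} (h : AntiComm n s t) : pc t s = -pc s t := by
  rw [AntiComm, PS_mul, PS_mul, pm_comm t s] at h
  have : (pc s t + pc t s) • PauliString n (pm s t) = 0 := by
    rw [add_smul, h, neg_add_cancel]
  have := smul_PS_eq_zero this
  linear_combination this

lemma not_anticomm_comm {s t : Fin n → Fin 4} (h : ¬ AntiComm n s t) :
    PauliString n s * PauliString n t = PauliString n t * PauliString n s := by
  rw [PS_mul, PS_mul, pm_comm t s]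
  rcases pc_or s t with h1 | h1
  · rw [h1]
  · exfalso
    exact h (by rw [AntiComm, PS_mul, PS_mul, pm_comm t s, h1, neg_smul])

lemma lie_PS {s t : Fin n → Fin 4} (h : AntiComm n s t) :
    ⁅PauliString n s, PauliString n t⁆ = (2 * pc s t) • PauliString n (pm s t) := by
  rw [Ring.lie_def, PS_mul, PS_mul, pm_comm t s, anticomm_pc h]
  module

lemma lie_PS_zero {s t : Fin n → Fin 4} (h : ¬ AntiComm n s t) :
    ⁅PauliString n s, PauliString n t⁆ = 0 := by
  rw [Ring.lie_def, not_anticomm_comm h, sub_self]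

lemma ad_sq {A B : Mx n} (hA : A * A = 1) (hAB : A * B = -(B * A)) :
    ⁅A, ⁅A, B⁆⁆ = (4:ℂ) • B := by
  have h1 : A * (A * B) = B := by rw [← mul_assoc, hA, one_mul]
  have h2 : A * B * A = -B := by rw [hAB, neg_mul, mul_assoc, hA, mul_one]
  simp only [Ring.lie_def, mul_sub, sub_mul]
  rw [h1, ← mul_assoc A B A, h2, mul_assoc, hA, mul_one]
  module

noncomputable def T0 (G : Finset (Fin n → Fin 4)) (x : Mx n) : Mx n :=
  ∑ R ∈ G, ⁅PauliString n R, ⁅PauliString n R, x⁆⁆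

lemma T0_smul (G : Finset (Fin n → Fin 4)) (c : ℂ) (x : Mx n) :
    T0 G (c • x) = c • T0 G x := by
  simp [T0, lie_smul, Finset.smul_sum]

open Classical in
lemma T0_PS (G : Finset (Fin n → Fin 4)) (Q : Fin n → Fin 4) :
    T0 G (PauliString n Q) =
      (4 * ((G.filter (fun R => AntiComm n R Q)).card : ℂ)) • PauliString n Q := by
  rw [T0]
  rw [Finset.sum_congr rfl (g := fun R =>
    if AntiComm n R Q then (4:ℂ) • PauliString n Q else 0)]
  · rw [Finset.sum_ite, Finset.sum_const_zero, add_zero, Finset.sum_const]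
    rw [← Nat.cast_smul_eq_nsmul ℂ, smul_smul, mul_comm]
  · intro R _
    by_cases h : AntiComm n R Q
    · rw [if_pos h, ad_sq (PS_sq R) h]
    · rw [if_neg h, lie_PS_zero h, lie_zero]

end FGaux

namespace FGaux

variable {n : ℕ}

lemma gamma_antisym (S R R' : Fin n → Fin 4) :
    Matrix.trace (⁅PauliString n R, PauliString n S⁆ * PauliString n R') =
      -Matrix.trace (⁅PauliString n R', PauliString n S⁆ * PauliString n R) := by
  set a := PauliString n R
  set b := PauliString n S
  set c := PauliString n R'
  simp only [Ring.lie_def, sub_mul, Matrix.trace_sub]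
  have e1 : Matrix.trace (a*b*c) = Matrix.trace (b*c*a) := by
    rw [mul_assoc, Matrix.trace_mul_comm]
  have e2 : Matrix.trace (b*a*c) = Matrix.trace (c*b*a) := by
    rw [Matrix.trace_mul_comm (b*a) c, ← mul_assoc]
  linear_combination e1 - e2

lemma expand_lie {G : Finset (Fin n → Fin 4)}
    (hclose : ∀ R ∈ G, ∀ S ∈ G, AntiComm n R S → pm R S ∈ G)
    {R S : Fin n → Fin 4} (hR : R ∈ G) (hS : S ∈ G) :
    ⁅PauliString n R, PauliString n S⁆ =
      ∑ R' ∈ G, (((2:ℂ)^n)⁻¹ *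
        Matrix.trace (⁅PauliString n R, PauliString n S⁆ * PauliString n R')) • PauliString n R' := by
  by_cases h : AntiComm n R S
  · rw [lie_PS h]
    rw [Finset.sum_eq_single_of_mem (pm R S) (hclose R hR S hS h)]
    · rw [smul_mul_assoc, Matrix.trace_smul, trace_PS_mul, if_pos rfl]
      congr 1
      have h2 : (2:ℂ)^n ≠ 0 := pow_ne_zero _ two_ne_zero
      field_simp
      rw [smul_eq_mul]
    · intro b _ hbne
      rw [smul_mul_assoc, Matrix.trace_smul, trace_PS_mul, if_neg (fun hc => hbne hc.symm)]
      simp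
  · rw [lie_PS_zero h]
    simp

lemma lie_sum' {ι : Type*} (s : Finset ι) (y : Mx n) (f : ι → Mx n) :
    ⁅y, ∑ i ∈ s, f i⁆ = ∑ i ∈ s, ⁅y, f i⁆ := by
  simp [Ring.lie_def, Finset.mul_sum, Finset.sum_mul, Finset.sum_sub_distrib]

lemma sum_lie' {ι : Type*} (s : Finset ι) (y : Mx n) (f : ι → Mx n) :
    ⁅∑ i ∈ s, f i, y⁆ = ∑ i ∈ s, ⁅f i, y⁆ := by
  simp [Ring.lie_def, Finset.mul_sum, Finset.sum_mul, Finset.sum_sub_distrib]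

lemma jacobi_aux (a y x : Mx n) :
    ⁅a, ⁅a, ⁅y, x⁆⁆⁆ - ⁅y, ⁅a, ⁅a, x⁆⁆⁆ = ⁅a, ⁅⁅a, y⁆, x⁆⁆ + ⁅⁅a, y⁆, ⁅a, x⁆⁆ := by
  simp only [Ring.lie_def]
  noncomm_ring

lemma double_sum_zero {ι : Type*} (s : Finset ι) (g : ι → ι → ℂ) (f : ι → ι → Mx n)
    (hg : ∀ a b, g a b = -g b a) (hf : ∀ a b, f a b = f b a) :
    ∑ a ∈ s, ∑ b ∈ s, g a b • f a b = 0 := by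
  set S := ∑ a ∈ s, ∑ b ∈ s, g a b • f a b with hS
  have h2 : S = -S := by
    calc S = ∑ a ∈ s, ∑ b ∈ s, -(g b a • f b a) := by
            refine Finset.sum_congr rfl (fun a _ => Finset.sum_congr rfl (fun b _ => ?_))
            rw [hg a b, hf a b, neg_smul]
      _ = -∑ a ∈ s, ∑ b ∈ s, g b a • f b a := by simp [Finset.sum_neg_distrib]
      _ = -S := by rw [hS, Finset.sum_comm]
  have h3 : (2:ℂ) • S = 0 := by
    rw [two_smul]
    nth_rewrite 2 [h2]
    exact add_neg_cancel S
  exact (smul_eq_zero.mp h3).resolve_left two_ne_zero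

lemma T0_comm {G : Finset (Fin n → Fin 4)}
    (hclose : ∀ R ∈ G, ∀ S ∈ G, AntiComm n R S → pm R S ∈ G)
    {S : Fin n → Fin 4} (hS : S ∈ G) (x : Mx n) :
    ⁅PauliString n S, T0 G x⁆ = T0 G ⁅PauliString n S, x⁆ := by
  have h0 : T0 G ⁅PauliString n S, x⁆ - ⁅PauliString n S, T0 G x⁆ = 0 := by
    rw [T0, T0, lie_sum', ← Finset.sum_sub_distrib]
    calc ∑ R ∈ G, (⁅PauliString n R, ⁅PauliString n R, ⁅PauliString n S, x⁆⁆⁆ -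
            ⁅PauliString n S, ⁅PauliString n R, ⁅PauliString n R, x⁆⁆⁆)
        = ∑ R ∈ G, (⁅PauliString n R, ⁅⁅PauliString n R, PauliString n S⁆, x⁆⁆ +
            ⁅⁅PauliString n R, PauliString n S⁆, ⁅PauliString n R, x⁆⁆) :=
          Finset.sum_congr rfl (fun R _ => jacobi_aux _ _ _)
      _ = ∑ R ∈ G, ∑ R' ∈ G, (((2:ℂ)^n)⁻¹ *
            Matrix.trace (⁅PauliString n R, PauliString n S⁆ * PauliString n R')) •
            (⁅PauliString n R, ⁅PauliString n R', x⁆⁆ +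
              ⁅PauliString n R', ⁅PauliString n R, x⁆⁆) := by
          refine Finset.sum_congr rfl (fun R hR => ?_)
          conv_lhs => rw [expand_lie hclose hR hS]
          simp [sum_lie', lie_sum', smul_lie, lie_smul, smul_add, Finset.sum_add_distrib]
      _ = 0 := by
          refine double_sum_zero G _ _ (fun a b => ?_) (fun a b => add_comm _ _)
          rw [gamma_antisym S a b, mul_neg]
  rw [← sub_eq_zero]
  rw [← neg_sub, h0, neg_zero]

end FGaux

namespace FGaux

variable {n : ℕ}

lemma span_trace_zero (A : Set (Fin n → Fin 4)) {t : Fin n → Fin 4} (ht : t ∉ A) {x : Mx n}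
    (hx : x ∈ Submodule.span ℝ ((fun s => Complex.I • PauliString n s) '' A)) :
    Matrix.trace (x * PauliString n t) = 0 := by
  induction hx using Submodule.span_induction with
  | mem y hy =>
    obtain ⟨s, hs, rfl⟩ := hy
    rw [smul_mul_assoc, Matrix.trace_smul, trace_PS_mul, if_neg (by rintro rfl; exact ht hs)]
    simp
  | zero => simp
  | add x y _ _ hx hy => rw [add_mul, Matrix.trace_add, hx, hy, add_zero]
  | smul r y _ hy => rw [smul_mul_assoc, Matrix.trace_smul, hy, smul_zero]

lemma mem_of_smul_PS_mem {A : Set (Fin n → Fin 4)} {c : ℂ} (hc : c ≠ 0) {m : Fin n → Fin 4}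
    (h : c • PauliString n m ∈ Submodule.span ℝ ((fun s => Complex.I • PauliString n s) '' A)) :
    m ∈ A := by
  by_contra hm
  have h0 := span_trace_zero A hm h
  rw [smul_mul_assoc, Matrix.trace_smul, trace_PS_mul, if_pos rfl, smul_eq_mul] at h0
  exact hc ((mul_eq_zero.mp h0).resolve_right (pow_ne_zero _ two_ne_zero))

open Classical in
lemma deg_edge {G : Finset (Fin n → Fin 4)}
    (hclose : ∀ R ∈ G, ∀ S ∈ G, AntiComm n R S → pm R S ∈ G)
    {S R : Fin n → Fin 4} (hS : S ∈ G) (hR : R ∈ G) (h : AntiComm n S R) :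
    (G.filter (fun T => AntiComm n T R)).card =
      (G.filter (fun T => AntiComm n T (pm S R))).card := by
  have hc := T0_comm hclose hS (PauliString n R)
  rw [T0_PS, lie_PS h, T0_smul, T0_PS, lie_smul, lie_PS h] at hc
  set dR := ((G.filter (fun T => AntiComm n T R)).card : ℂ) with hdR
  set dm := ((G.filter (fun T => AntiComm n T (pm S R))).card : ℂ) with hdm
  have hz : ((4 * dR) * (2 * pc S R) - (2 * pc S R) * (4 * dm)) • PauliString n (pm S R) = 0 := by
    rw [sub_smul, smul_smul, smul_smul] at *
    rw [hc, sub_self]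
  have h0 := smul_PS_eq_zero hz
  have h8 : (8:ℂ) * pc S R ≠ 0 := mul_ne_zero (by norm_num) (pc_ne_zero S R)
  have : (8:ℂ) * pc S R * dR = (8:ℂ) * pc S R * dm := by linear_combination h0
  have h9 := mul_left_cancel₀ h8 this
  rw [hdR, hdm] at h9
  exact_mod_cast h9

lemma real_smul_Mx (r : ℝ) (X : Mx n) : r • X = ((r:ℂ)) • X := by
  ext i j
  simp [Matrix.smul_apply, Complex.real_smul]

lemma pc_sq {s t : Fin n → Fin 4} (h : AntiComm n s t) : pc s t = Complex.I ∨ pc s t = -Complex.I := by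
  have h1 := pc_mul_pc s t
  rw [anticomm_pc h] at h1
  have h2 : (pc s t - Complex.I) * (pc s t + Complex.I) = 0 := by
    have : Complex.I * Complex.I = -1 := Complex.I_mul_I
    linear_combination -h1 - this
  rcases mul_eq_zero.mp h2 with h3 | h3
  · left; linear_combination h3
  · right; linear_combination h3

end FGaux

open FGaux in
/-- If the real span of `i·G` is already a (Lie-bracket-closed) simple real Lie algebra,
then the frustration graph of `G` is regular: every `P ∈ G` anticommutes with the same
number of elements of `G`. -/
theorem frustration_graph_regular (n : ℕ) (G : Finset (Fin n → Fin 4))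
    (L : LieSubalgebra ℝ (Matrix (Fin n → Fin 2) (Fin n → Fin 2) ℂ))
    (hL : (L : Set (Matrix (Fin n → Fin 2) (Fin n → Fin 2) ℂ)) =
      (Submodule.span ℝ
        ((fun s => Complex.I • PauliString n s) '' (G : Set (Fin n → Fin 4))) :
          Submodule ℝ (Matrix (Fin n → Fin 2) (Fin n → Fin 2) ℂ)))
    (hsimple : LieAlgebra.IsSimple ℝ L)
    (P Q : Fin n → Fin 4) (hP : P ∈ G) (hQ : Q ∈ G) :
    (G.filter (fun R => AntiComm n R P)).card =
      (G.filter (fun R => AntiComm n R Q)).card := by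
  classical
  by_contra hne
  have hmem : ∀ x : Mx n,
      x ∈ L ↔ x ∈ Submodule.span ℝ
        ((fun s => Complex.I • PauliString n s) '' (G : Set (Fin n → Fin 4))) := by
    intro x
    rw [← LieSubalgebra.mem_coe, hL, SetLike.mem_coe]
  have hclose : ∀ R ∈ G, ∀ S ∈ G, AntiComm n R S → pm R S ∈ G := by
    intro R hR S hS h
    have h1 : Complex.I • PauliString n R ∈ L :=
      (hmem _).mpr (Submodule.subset_span ⟨R, hR, rfl⟩)
    have h2 : Complex.I • PauliString n S ∈ L :=
      (hmem _).mpr (Submodule.subset_span ⟨S, hS, rfl⟩)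
    have h3 := L.lie_mem h1 h2
    have h4 : ⁅Complex.I • PauliString n R, Complex.I • PauliString n S⁆
        = (-(2 * pc R S)) • PauliString n (pm R S) := by
      rw [smul_lie, lie_smul, lie_PS h, smul_smul, smul_smul]
      congr 1
      rw [← mul_assoc, Complex.I_mul_I]
      ring
    rw [h4] at h3
    exact mem_of_smul_PS_mem
      (neg_ne_zero.mpr (mul_ne_zero two_ne_zero (pc_ne_zero R S))) ((hmem _).mp h3)
  set A : Set (Fin n → Fin 4) := {s | s ∈ G ∧
    (G.filter (fun R => AntiComm n R s)).card =
      (G.filter (fun R => AntiComm n R P)).card} with hA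
  set W : Submodule ℝ (Mx n) :=
    Submodule.span ℝ ((fun s => Complex.I • PauliString n s) '' A) with hWdef
  have stab : ∀ x ∈ Submodule.span ℝ
      ((fun s => Complex.I • PauliString n s) '' (G : Set (Fin n → Fin 4))),
      ∀ w ∈ W, ⁅x, w⁆ ∈ W := by
    intro x hx
    induction hx using Submodule.span_induction with
    | mem y hy =>
      intro w hw
      induction hw using Submodule.span_induction with
      | mem v hv =>
        obtain ⟨S, hS, rfl⟩ := hy
        obtain ⟨R, hRA, rfl⟩ := hv
        by_cases hac : AntiComm n S R
        · have h4 : ⁅Complex.I • PauliString n S, Complex.I • PauliString n R⁆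
              = (-(2 * pc S R)) • PauliString n (pm S R) := by
            rw [smul_lie, lie_smul, lie_PS hac, smul_smul, smul_smul]
            congr 1
            rw [← mul_assoc, Complex.I_mul_I]
            ring
          have hmA : pm S R ∈ A := by
            refine ⟨hclose S hS R hRA.1 hac, ?_⟩
            rw [← deg_edge hclose hS hRA.1 hac]
            exact hRA.2
          rcases pc_sq hac with hpc | hpc
          · rw [h4, hpc]
            have he : (-(2 * Complex.I)) • PauliString n (pm S R)
                = (-2 : ℝ) • (Complex.I • PauliString n (pm S R)) := by
              rw [real_smul_Mx, smul_smul]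
              norm_num
            rw [he]
            exact W.smul_mem _ (Submodule.subset_span ⟨pm S R, hmA, rfl⟩)
          · rw [h4, hpc]
            have he : (-(2 * -Complex.I)) • PauliString n (pm S R)
                = (2 : ℝ) • (Complex.I • PauliString n (pm S R)) := by
              rw [real_smul_Mx, smul_smul]
              norm_num
            rw [he]
            exact W.smul_mem _ (Submodule.subset_span ⟨pm S R, hmA, rfl⟩)
        · have h5 : ⁅Complex.I • PauliString n S, Complex.I • PauliString n R⁆ = 0 := by
            rw [smul_lie, lie_smul, lie_PS_zero hac, smul_zero, smul_zero]
          rw [h5]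
          exact W.zero_mem
      | zero => rw [lie_zero]; exact W.zero_mem
      | add w₁ w₂ _ _ h1 h2 => rw [lie_add]; exact W.add_mem h1 h2
      | smul r w _ hw =>
        rw [Ring.lie_def, mul_smul_comm, smul_mul_assoc, ← smul_sub, ← Ring.lie_def]
        exact W.smul_mem r hw
    | zero => intro w hw; rw [zero_lie]; exact W.zero_mem
    | add x₁ x₂ _ _ h1 h2 => intro w hw; rw [add_lie]; exact W.add_mem (h1 w hw) (h2 w hw)
    | smul r x _ hx =>
      intro w hw
      rw [Ring.lie_def, smul_mul_assoc, mul_smul_comm, ← smul_sub, ← Ring.lie_def]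
      exact W.smul_mem r (hx w hw)
  let Wsub : Submodule ℝ L :=
    { carrier := {x : L | (x : Mx n) ∈ W}
      add_mem' := fun {a b} ha hb => by
        simp only [Set.mem_setOf_eq] at *
        simpa using W.add_mem ha hb
      zero_mem' := by
        simp only [Set.mem_setOf_eq]
        simpa using W.zero_mem
      smul_mem' := fun r a ha => by
        simp only [Set.mem_setOf_eq] at *
        simpa using W.smul_mem r ha }
  let WL : LieIdeal ℝ L :=
    { toSubmodule := Wsub
      lie_mem := fun {x m} hm => by
        show ((⁅x, m⁆ : L) : Mx n) ∈ W
        rw [LieSubalgebra.coe_bracket]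
        exact stab _ ((hmem _).mp x.2) _ hm }
  rcases hsimple.eq_bot_or_eq_top WL with hbot | htop
  · have hPL : Complex.I • PauliString n P ∈ L :=
      (hmem _).mpr (Submodule.subset_span ⟨P, hP, rfl⟩)
    have hxP : (⟨Complex.I • PauliString n P, hPL⟩ : L) ∈ WL := by
      show (Complex.I • PauliString n P) ∈ W
      exact Submodule.subset_span ⟨P, ⟨hP, rfl⟩, rfl⟩
    rw [hbot, LieSubmodule.mem_bot] at hxP
    have h0 : Complex.I • PauliString n P = 0 := Subtype.ext_iff.mp hxP
    exact Complex.I_ne_zero (smul_PS_eq_zero h0)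
  · have hQL : Complex.I • PauliString n Q ∈ L :=
      (hmem _).mpr (Submodule.subset_span ⟨Q, hQ, rfl⟩)
    have hxQ : (⟨Complex.I • PauliString n Q, hQL⟩ : L) ∈ WL := by
      rw [htop]
      exact LieSubmodule.mem_top _
    have hQW : Complex.I • PauliString n Q ∈ W := hxQ
    have hQA : Q ∉ A := fun hgood => hne hgood.2.symm
    have h0 := span_trace_zero A hQA hQW
    rw [smul_mul_assoc, Matrix.trace_smul, trace_PS_mul, if_pos rfl, smul_eq_mul] at h0
    exact (mul_ne_zero Complex.I_ne_zero (pow_ne_zero _ two_ne_zero)) h0
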